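/- With f(t) = -t and μ(l) = -l², the function L(t) = tan t satisfies -t + tan t - ∫₀ᵗ tan²(s) ds = 0 for all 0 ≤ t < π/2; that is, L(t) = tan t solves the extended Skorohod problem with x ≡ 0 on [0, π/2), and L blows up as t → π/2. -/

import Mathlib

open Set Real Filter

lemma tan_sq_integral (t : ℝ) (ht : t ∈ Ico (0:ℝ) (π / 2)) :
    ∫ s in (0:ℝ)..t, (Real.tan s) ^ 2 = Real.tan t - t := by
  obtain ⟨ht0, ht2⟩ := ht
  have hderiv : ∀ s ∈ uIcc (0:ℝ) t,
      HasDerivAt (fun u => Real.tan u - u) ((Real.tan s) ^ 2) s := by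
    intro s hs
    rw [uIcc_of_le ht0] at hs
    have hcos : Real.cos s ≠ 0 := by
      apply ne_of_gt
      apply Real.cos_pos_of_mem_Ioo
      constructor
      · linarith [hs.1, Real.pi_pos]
      · exact lt_of_le_of_lt hs.2 ht2
    have h1 : HasDerivAt Real.tan (1 / Real.cos s ^ 2) s := Real.hasDerivAt_tan hcos
    have h2 : HasDerivAt (fun u => Real.tan u - u) (1 / Real.cos s ^ 2 - 1) s := h1.sub (hasDerivAt_id s)
    convert h2 using 1
    rw [Real.tan_eq_sin_div_cos]
    field_simp
    rw [Real.sin_sq_eq_half_sub, Real.cos_sq]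
    ring
  have hcont : IntervalIntegrable (fun s => (Real.tan s) ^ 2) MeasureTheory.volume 0 t := by
    apply ContinuousOn.intervalIntegrable
    apply ContinuousOn.pow
    intro s hs
    rw [uIcc_of_le ht0] at hs
    apply ContinuousAt.continuousWithinAt
    apply Real.continuousAt_tan.mpr
    apply ne_of_gt
    apply Real.cos_pos_of_mem_Ioo
    constructor
    · linarith [hs.1, Real.pi_pos]
    · exact lt_of_le_of_lt hs.2 ht2
  rw [intervalIntegral.integral_eq_sub_of_hasDerivAt hderiv hcont]
  simp [Real.tan_zero]

/-- Blow-up of the reflection term: with `f(t) = -t` and `μ(l) = -l²`, the function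
`L(t) = tan t` satisfies `-t + tan t - ∫₀ᵗ tan² s ds = 0` on `[0, π/2)` (so `x ≡ 0` there),
and `L` blows up as `t → (π/2)⁻`. -/
theorem skorohod_drift_blowup :
    (∀ t ∈ Ico (0:ℝ) (π / 2),
      (-t) + Real.tan t - ∫ s in (0:ℝ)..t, (Real.tan s) ^ 2 = 0) ∧
    Tendsto Real.tan (nhdsWithin (π / 2) (Iio (π / 2))) atTop := by
  constructor
  · intro t ht
    rw [tan_sq_integral t ht]
    ring
  · exact Real.tendsto_tan_pi_div_two
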